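/- Let p : Ω → ℝ be C², W = √(1+p_x²+p_y²), and let q satisfy q_x = -p_y/W, q_y = p_x/W. Fix λ ∈ ℝ and set f = (cosh λ) p, g = (sinh λ) q. Then the first fundamental form quantity ω² := (1+f_x²+g_x²)(1+f_y²+g_y²) - (f_x f_y + g_x g_y)² equals ((cosh²λ) W - (sinh²λ)/W)². -/

import Mathlib

noncomputable def pdx {E : Type*} [NormedAddCommGroup E] [NormedSpace ℝ E]
    (f : ℝ × ℝ → E) : ℝ × ℝ → E := fun p => fderiv ℝ f p (1, 0)

noncomputable def pdy {E : Type*} [NormedAddCommGroup E] [NormedSpace ℝ E]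
    (f : ℝ × ℝ → E) : ℝ × ℝ → E := fun p => fderiv ℝ f p (0, 1)

noncomputable def Ec (f g : ℝ × ℝ → ℝ) : ℝ × ℝ → ℝ :=
  fun p => 1 + (pdx f p) ^ 2 + (pdx g p) ^ 2

noncomputable def Fc (f g : ℝ × ℝ → ℝ) : ℝ × ℝ → ℝ :=
  fun p => pdx f p * pdy f p + pdx g p * pdy g p

noncomputable def Gc (f g : ℝ × ℝ → ℝ) : ℝ × ℝ → ℝ :=
  fun p => 1 + (pdy f p) ^ 2 + (pdy g p) ^ 2

noncomputable def om (f g : ℝ × ℝ → ℝ) : ℝ × ℝ → ℝ :=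
  fun p => Real.sqrt (Ec f g p * Gc f g p - (Fc f g p) ^ 2)

noncomputable def Wg (p : ℝ × ℝ → ℝ) : ℝ × ℝ → ℝ :=
  fun v => Real.sqrt (1 + (pdx p v) ^ 2 + (pdy p v) ^ 2)

lemma pd_const_mul' (c : ℝ) (q : ℝ × ℝ → ℝ) (v : ℝ × ℝ) (w : ℝ × ℝ) :
    fderiv ℝ (fun v => c * q v) v w = c * fderiv ℝ q v w := by
  by_cases hc : c = 0
  · simp [hc]
  by_cases hq : DifferentiableAt ℝ q v
  · rw [fderiv_const_mul hq]; simp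
  · have h2 : ¬ DifferentiableAt ℝ (fun v => c * q v) v := by
      intro h
      have := h.const_mul c⁻¹
      simp only [← mul_assoc, inv_mul_cancel₀ hc, one_mul] at this
      exact hq this
    rw [fderiv_zero_of_not_differentiableAt hq, fderiv_zero_of_not_differentiableAt h2]
    simp

lemma key_alg (a b c s W : ℝ) (hW : W ≠ 0) (hW2 : W^2 = 1+a^2+b^2) (hcs : c^2 - s^2 = 1) :
    (1 + (c*a)^2 + (s*(-b/W))^2) * (1 + (c*b)^2 + (s*(a/W))^2)
      - ((c*a)*(c*b) + (s*(-b/W))*(s*(a/W)))^2 = (c^2*W - s^2/W)^2 := by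
  field_simp
  linear_combination -(W^8 * (c^2*s^2*(a^2+b^2+W^2-1) + c^2*W^2 + s^2)) * hW2 -
    (W^8 * (-(s^2*W^4) + s^2 - W^4 - W^2 - (c^2-s^2-1)*W^4)) * hcs +
    (2*(s^2*W^8 - W^10 - c^2*W^12)) * hcs +
    (-b^2*c^2*s^2*W^2 - c^2*W^4 + b^2*c^2*s^2*W^8 + c^2*W^10 - a^2*c^2*s^2*W^2 + a^2*c^2*s^2*W^8 - s^2*W^2 + s^2*W^8 - c^2*s^2*W^4 + c^2*s^2*W^2 + c^2*s^2*W^10 - c^2*s^2*W^8) * hW2 +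
    (-c^2*W^6 + c^2*W^12 - W^4 + W^10 + s^2*W^2 - s^2*W^8) * hcs

theorem stmt_7 (Ω : Set (ℝ × ℝ)) (hΩ : IsOpen Ω) (p q : ℝ × ℝ → ℝ)
    (hp : ContDiffOn ℝ 2 p Ω)
    (hLag : ∀ v ∈ Ω, pdx q v = -pdy p v / Wg p v ∧ pdy q v = pdx p v / Wg p v)
    (lam : ℝ) (f g : ℝ × ℝ → ℝ)
    (hfdef : f = fun v => Real.cosh lam * p v) (hgdef : g = fun v => Real.sinh lam * q v) :
    ∀ v ∈ Ω,
      (1 + (pdx f v) ^ 2 + (pdx g v) ^ 2) * (1 + (pdy f v) ^ 2 + (pdy g v) ^ 2) -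
        (pdx f v * pdy f v + pdx g v * pdy g v) ^ 2 =
      ((Real.cosh lam) ^ 2 * Wg p v - (Real.sinh lam) ^ 2 / Wg p v) ^ 2 := by
  intro v hv
  obtain ⟨hqx, hqy⟩ := hLag v hv
  set a := pdx p v
  set b := pdy p v
  set c := Real.cosh lam
  set s := Real.sinh lam
  have hfx : pdx f v = c * a := by simp only [pdx, hfdef]; exact pd_const_mul' c p v (1, 0)
  have hfy : pdy f v = c * b := by simp only [pdy, hfdef]; exact pd_const_mul' c p v (0, 1)
  have hgx : pdx g v = s * (-b / Wg p v) := by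
    simp only [pdx, hgdef]
    rw [pd_const_mul' s q v (1, 0)]
    exact congrArg (s * ·) hqx
  have hgy : pdy g v = s * (a / Wg p v) := by
    simp only [pdy, hgdef]
    rw [pd_const_mul' s q v (0, 1)]
    exact congrArg (s * ·) hqy
  have hWnn : (0:ℝ) ≤ 1 + a ^ 2 + b ^ 2 := by positivity
  have hW2 : Wg p v ^ 2 = 1 + a ^ 2 + b ^ 2 := Real.sq_sqrt hWnn
  have hWpos : 0 < Wg p v := Real.sqrt_pos.mpr (by positivity)
  rw [hfx, hfy, hgx, hgy]
  exact key_alg a b c s (Wg p v) hWpos.ne' hW2 (Real.cosh_sq_sub_sinh_sq lam)
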